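/- Let X be a real Banach space and φ : X → ℝ a C¹ functional that is bounded below. Then φ satisfies the Palais–Smale condition if and only if φ satisfies the Cerami condition. -/

import Mathlib

open Filter Topology

/-- A weak form of Ekeland's variational principle. -/
lemma ekeland {α : Type*} [MetricSpace α] [CompleteSpace α]
    {f : α → ℝ} (hf : Continuous f) {m : ℝ} (hm : ∀ z, m ≤ f z)
    {σ : ℝ} (hσ : 0 < σ) (x₀ : α) :
    ∃ p, f p ≤ f x₀ ∧ σ * dist x₀ p ≤ f x₀ - m ∧ ∀ z, f p ≤ f z + σ * dist p z := by
  set S : α → Set α := fun a => {z | f z + σ * dist a z ≤ f a} with hS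
  have hmem : ∀ a, a ∈ S a := by intro a; simp [hS]
  have hne : ∀ a, (S a).Nonempty := fun a => ⟨a, hmem a⟩
  have hbdd : ∀ a, BddBelow (f '' S a) := fun a => ⟨m, by rintro t ⟨z, _, rfl⟩; exact hm z⟩
  have hstep : ∀ (n : ℕ) (a : α), ∃ z, z ∈ S a ∧ f z ≤ sInf (f '' S a) + (1/2)^(n+1) := by
    intro n a
    have hpos : (0:ℝ) < (1/2)^(n+1) := by positivity
    have : sInf (f '' S a) < sInf (f '' S a) + (1/2)^(n+1) := by linarith
    obtain ⟨t, ⟨z, hz, rfl⟩, ht⟩ := exists_lt_of_csInf_lt ((hne a).image f) this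
    exact ⟨z, hz, ht.le⟩
  choose F hF1 hF2 using hstep
  let y : ℕ → α := fun n => Nat.rec x₀ F n
  have hy0 : y 0 = x₀ := rfl
  have hysucc : ∀ n, y (n+1) = F n (y n) := fun n => rfl
  have key : ∀ n, f (y (n+1)) + σ * dist (y n) (y (n+1)) ≤ f (y n) := by
    intro n; rw [hysucc]; exact hF1 n (y n)
  have hanti : ∀ n, f (y (n+1)) ≤ f (y n) := by
    intro n
    have := key n
    have h2 : 0 ≤ σ * dist (y n) (y (n+1)) := by positivity
    linarith
  have hmono : ∀ {n k : ℕ}, n ≤ k → f (y k) ≤ f (y n) := by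
    intro n k h
    induction k with
    | zero => simp_all
    | succ k ih =>
      rcases Nat.lt_or_ge n (k+1) with h' | h'
      · exact (hanti k).trans (ih (Nat.lt_succ_iff.mp h'))
      · have : n = k + 1 := le_antisymm h h'
        simp [this]
  have hdist : ∀ n k, n ≤ k → σ * dist (y n) (y k) ≤ f (y n) - f (y k) := by
    intro n k h
    induction k with
    | zero => interval_cases n; simp
    | succ k ih =>
      rcases Nat.lt_or_ge n (k+1) with h' | h'
      · have h'' := Nat.lt_succ_iff.mp h'
        have t1 := ih h''
        have t2 := key k
        have t3 : dist (y n) (y (k+1)) ≤ dist (y n) (y k) + dist (y k) (y (k+1)) :=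
          dist_triangle _ _ _
        nlinarith [hσ.le]
      · have : n = k + 1 := le_antisymm h h'
        simp [this]
  set L : ℝ := ⨅ n, f (y n) with hL
  have hbddy : BddBelow (Set.range fun n => f (y n)) := ⟨m, by rintro t ⟨n, rfl⟩; exact hm _⟩
  have hLle : ∀ n, L ≤ f (y n) := fun n => ciInf_le hbddy n
  have hfL : Tendsto (fun n => f (y n)) atTop (𝓝 L) :=
    tendsto_atTop_ciInf (fun a b h => hmono h) hbddy
  have hcauchy : CauchySeq y := by
    apply cauchySeq_of_le_tendsto_0 (fun N => (f (y N) - L) / σ)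
    · intro n k N hn hk
      rcases le_total n k with h | h
      · have h1 := hdist n k h
        have h2 := hmono hn
        have h3 := hLle k
        rw [le_div_iff₀ hσ]
        nlinarith
      · have h1 := hdist k n h
        have h2 := hmono hk
        have h3 := hLle n
        rw [dist_comm, le_div_iff₀ hσ]
        nlinarith
    · have : Tendsto (fun N => f (y N) - L) atTop (𝓝 (L - L)) := hfL.sub_const L
      simpa using this.div_const σ
  obtain ⟨p, hp⟩ := cauchySeq_tendsto_of_complete hcauchy
  have hfp : f p = L :=
    tendsto_nhds_unique (hf.continuousAt.tendsto.comp hp) hfL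
  have hdistp : ∀ n, σ * dist (y n) p ≤ f (y n) - L := by
    intro n
    have t1 : Tendsto (fun k => σ * dist (y n) (y k)) atTop (𝓝 (σ * dist (y n) p)) :=
      tendsto_const_nhds.mul (tendsto_const_nhds.dist hp)
    have t2 : Tendsto (fun k => f (y n) - f (y k)) atTop (𝓝 (f (y n) - L)) :=
      tendsto_const_nhds.sub hfL
    refine le_of_tendsto_of_tendsto t1 t2 ?_
    filter_upwards [eventually_ge_atTop n] with k hk
    exact hdist n k hk
  refine ⟨p, ?_, ?_, ?_⟩
  · rw [hfp, ← hy0]; exact hLle 0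
  · have h0 := hdistp 0
    have hmL : m ≤ L := by rw [← hfp]; exact hm p
    rw [hy0] at h0
    linarith
  · intro z
    by_contra hcon
    push_neg at hcon
    have hzS : ∀ n, z ∈ S (y n) := by
      intro n
      have t3 : dist (y n) z ≤ dist (y n) p + dist p z := dist_triangle _ _ _
      have t4 := hdistp n
      simp only [hS, Set.mem_setOf_eq]
      nlinarith [hσ.le, hfp]
    have hle : ∀ n, f (y (n+1)) ≤ f z + (1/2)^(n+1) := by
      intro n
      have h1 : sInf (f '' S (y n)) ≤ f z := csInf_le (hbdd _) ⟨z, hzS n, rfl⟩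
      have h2 := hF2 n (y n)
      rw [← hysucc] at h2
      linarith
    have hLz : L ≤ f z := by
      have t1 : Tendsto (fun n => f (y (n+1))) atTop (𝓝 L) :=
        hfL.comp (tendsto_add_atTop_nat 1)
      have t2 : Tendsto (fun n : ℕ => f z + (1/2:ℝ)^(n+1)) atTop (𝓝 (f z + 0)) := by
        refine tendsto_const_nhds.add ?_
        have : Tendsto (fun n : ℕ => (1/2:ℝ)^n) atTop (𝓝 0) :=
          tendsto_pow_atTop_nhds_zero_of_lt_one (by norm_num) (by norm_num)
        exact this.comp (tendsto_add_atTop_nat 1)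
      have := le_of_tendsto_of_tendsto' t1 (by simpa using t2) fun n => hle n
      simpa using this
    have hd : 0 ≤ σ * dist p z := by positivity
    rw [hfp] at hcon
    linarith

lemma deriv_bound {X : Type*} [NormedAddCommGroup X] [NormedSpace ℝ X]
    {φ : X → ℝ} {φ' : X →L[ℝ] ℝ} {y : X} (hdiff : HasFDerivAt φ φ' y)
    {σ r : ℝ} (hσ : 0 ≤ σ) (hr : 0 < r)
    (h : ∀ z, dist y z < r → φ y ≤ φ z + σ * dist y z) : ‖φ'‖ ≤ σ := by
  have main : ∀ u : X, -(σ * ‖u‖) ≤ φ' u := by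
    intro u
    rcases eq_or_ne u 0 with rfl | hu
    · simp
    have hunorm : (0:ℝ) < ‖u‖ := norm_pos_iff.mpr hu
    -- g t = φ (y + t • u) has derivative φ' u at 0
    have hline : HasDerivAt (fun t : ℝ => y + t • u) u 0 := by
      simpa using ((hasDerivAt_id (0:ℝ)).smul_const u).const_add y
    have hy' : HasFDerivAt φ φ' (y + (0:ℝ) • u) := by simpa using hdiff
    have hg : HasDerivAt (fun t : ℝ => φ (y + t • u)) (φ' u) 0 :=
      hy'.comp_hasDerivAt 0 hline
    -- slope bound on (0, r/‖u‖)
    have hslope : Tendsto (slope (fun t : ℝ => φ (y + t • u)) 0) (𝓝[>] 0) (𝓝 (φ' u)) :=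
      (hasDerivAt_iff_tendsto_slope.mp hg).mono_left
        (nhdsWithin_mono 0 fun t ht => ne_of_gt ht)
    refine ge_of_tendsto hslope ?_
    filter_upwards [Ioo_mem_nhdsGT_of_mem (Set.left_mem_Ico.mpr (by positivity : (0:ℝ) < r / ‖u‖))]
      with t ht
    obtain ⟨ht0, htr⟩ := ht
    have hdist : dist y (y + t • u) = t * ‖u‖ := by
      rw [dist_eq_norm]
      simp [norm_smul, abs_of_pos ht0]
    have hlt : dist y (y + t • u) < r := by
      rw [hdist]
      calc t * ‖u‖ < (r / ‖u‖) * ‖u‖ := mul_lt_mul_of_pos_right htr hunorm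
        _ = r := div_mul_cancel₀ r hunorm.ne'
    have hz := h (y + t • u) hlt
    rw [hdist] at hz
    rw [slope_def_field, sub_zero, le_div_iff₀ ht0]; simp only [zero_smul, add_zero]
    nlinarith
  refine ContinuousLinearMap.opNorm_le_bound _ hσ fun u => ?_
  rw [Real.norm_eq_abs, abs_le]
  constructor
  · simpa using main u
  · have := main (-u)
    simp only [map_neg, norm_neg] at this
    linarith

/-- For a `C¹` functional `φ` on a Banach space `X` which is bounded below, the
Palais–Smale condition holds if and only if the Cerami condition holds. -/
theorem stmt_8 {X : Type*} [NormedAddCommGroup X] [NormedSpace ℝ X] [CompleteSpace X]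
    (φ : X → ℝ) (φ' : X → X →L[ℝ] ℝ)
    (hdiff : ∀ x, HasFDerivAt φ (φ' x) x)
    (hcont : Continuous φ')
    (hbdd : BddBelow (Set.range φ)) :
    ((∀ x : ℕ → X, (∃ M : ℝ, ∀ j, |φ (x j)| ≤ M) →
        Tendsto (fun j => ‖φ' (x j)‖) atTop (𝓝 0) →
        ∃ (s : ℕ → ℕ) (y : X), StrictMono s ∧ Tendsto (fun j => x (s j)) atTop (𝓝 y)) ↔
      (∀ x : ℕ → X, (∃ M : ℝ, ∀ j, |φ (x j)| ≤ M) →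
        Tendsto (fun j => (1 + ‖x j‖) * ‖φ' (x j)‖) atTop (𝓝 0) →
        ∃ (s : ℕ → ℕ) (y : X), StrictMono s ∧ Tendsto (fun j => x (s j)) atTop (𝓝 y))) := by
  have hφcont : Continuous φ := by
    rw [continuous_iff_continuousAt]; exact fun x => (hdiff x).continuousAt
  obtain ⟨m, hm'⟩ := hbdd
  have hm : ∀ z, m ≤ φ z := fun z => hm' ⟨z, rfl⟩
  constructor
  · -- PS → Cerami
    intro hPS x hM hprod
    refine hPS x hM ?_
    refine squeeze_zero (fun j => norm_nonneg _) (fun j => ?_) hprod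
    calc ‖φ' (x j)‖ = 1 * ‖φ' (x j)‖ := (one_mul _).symm
      _ ≤ (1 + ‖x j‖) * ‖φ' (x j)‖ :=
          mul_le_mul_of_nonneg_right (by linarith [norm_nonneg (x j)]) (norm_nonneg _)
  · -- Cerami → PS
    intro hC x hMx hderiv
    obtain ⟨M, hM⟩ := hMx
    by_cases hb : ∀ C : ℝ, ∀ᶠ j in atTop, C ≤ ‖x j‖
    · -- unbounded case: derive a contradiction with the Cerami condition
      exfalso
      have hplarge : ∀ R : ℝ, ∃ v : X, R ≤ ‖v‖ ∧ φ v ≤ M := by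
        intro R
        obtain ⟨j, hj⟩ := (hb R).exists
        exact ⟨x j, hj, (abs_le.mp (hM j)).2⟩
      set g : ℝ → ℝ := fun R => sInf (φ '' {v : X | R ≤ ‖v‖}) with hg
      have hgne : ∀ R : ℝ, (φ '' {v : X | R ≤ ‖v‖}).Nonempty := by
        intro R
        obtain ⟨v, hv, _⟩ := hplarge R
        exact ⟨φ v, v, hv, rfl⟩
      have hgbdd : ∀ R : ℝ, BddBelow (φ '' {v : X | R ≤ ‖v‖}) :=
        fun R => ⟨m, by rintro t ⟨v, _, rfl⟩; exact hm v⟩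
      have hgleM : ∀ R : ℝ, g R ≤ M := by
        intro R
        obtain ⟨v, hv, hvM⟩ := hplarge R
        exact (csInf_le (hgbdd R) ⟨v, hv, rfl⟩).trans hvM
      have hrange_ne : (Set.range g).Nonempty := ⟨g 0, 0, rfl⟩
      have hrange_bdd : BddAbove (Set.range g) := ⟨M, by rintro t ⟨R, rfl⟩; exact hgleM R⟩
      set c : ℝ := sSup (Set.range g) with hc
      have hy : ∀ n : ℕ, ∃ y : X, |φ y| ≤ |c| + 1 ∧ (n:ℝ) + 1 ≤ ‖y‖ ∧
          (1 + ‖y‖) * ‖φ' y‖ ≤ 8 / ((n:ℝ) + 1) := by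
        intro n
        set ε : ℝ := 1 / ((n:ℝ) + 1) with hε
        have hεpos : 0 < ε := by positivity
        have hεle1 : ε ≤ 1 := by
          rw [hε, div_le_one (by positivity)]
          linarith [Nat.cast_nonneg (α := ℝ) n]
        obtain ⟨gR, ⟨R₀, rfl⟩, hgR⟩ := exists_lt_of_lt_csSup hrange_ne (sub_lt_self c hεpos)
        set R : ℝ := max R₀ 0 with hR
        have hR0 : 0 ≤ R := le_max_right _ _
        have hgR' : c - ε < g R := by
          refine hgR.trans_le (csInf_le_csInf (hgbdd R₀) (hgne R) ?_)
          rintro t ⟨v, hv, rfl⟩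
          exact ⟨v, show R₀ ≤ ‖v‖ from le_trans (le_max_left _ _) hv, rfl⟩
        set W : ℝ := max (2 * R + 2) (2 * ((n:ℝ) + 1)) with hW
        have hgW : g W < c + ε := lt_of_le_of_lt (le_csSup hrange_bdd ⟨W, rfl⟩) (by linarith)
        obtain ⟨t, ⟨w, hwmem, rfl⟩, hwlt⟩ := exists_lt_of_csInf_lt (hgne W) hgW
        have hwW : W ≤ ‖w‖ := hwmem
        have hw1 : 2 * R + 2 ≤ ‖w‖ := le_trans (le_max_left _ _) hwW
        have hw2 : 2 * ((n:ℝ) + 1) ≤ ‖w‖ := le_trans (le_max_right _ _) hwW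
        have hw0 : (0:ℝ) < ‖w‖ := by linarith [Nat.cast_nonneg (α := ℝ) n]
        -- Ekeland on the closed set {v | R ≤ ‖v‖}
        have hclosed : IsClosed {v : X | R ≤ ‖v‖} := isClosed_le continuous_const continuous_norm
        haveI : CompleteSpace {v : X // R ≤ ‖v‖} := hclosed.completeSpace_coe
        set σ : ℝ := 4 * ε / ‖w‖ with hσdef
        have hσpos : 0 < σ := by positivity
        have hσW : σ * ‖w‖ = 4 * ε := div_mul_cancel₀ _ hw0.ne'
        have hfcont : Continuous fun z : {v : X // R ≤ ‖v‖} => φ z.1 :=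
          hφcont.comp continuous_subtype_val
        have hm2 : ∀ z : {v : X // R ≤ ‖v‖}, g R ≤ φ z.1 :=
          fun z => csInf_le (hgbdd R) ⟨z.1, z.2, rfl⟩
        have hwR : R ≤ ‖w‖ := by linarith
        obtain ⟨p, hp1, hp2, hp3⟩ := ekeland hfcont hm2 hσpos (⟨w, hwR⟩ : {v : X // R ≤ ‖v‖})
        simp only [Subtype.dist_eq] at hp2 hp3
        have hp1' : φ p.1 ≤ φ w := hp1
        have hpge : g R ≤ φ p.1 := hm2 p
        -- distance control
        have hd : dist w p.1 ≤ ‖w‖ / 2 := by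
          have h2 : σ * dist w p.1 ≤ 2 * ε := le_trans hp2 (by linarith)
          nlinarith [dist_nonneg (x := w) (y := p.1)]
        have hnp_lb : ‖w‖ / 2 ≤ ‖p.1‖ := by
          have h3 : ‖w‖ - ‖p.1‖ ≤ ‖w - p.1‖ := norm_sub_norm_le w p.1
          rw [← dist_eq_norm] at h3
          linarith
        have hnp_ub : ‖p.1‖ ≤ 3 * ‖w‖ / 2 := by
          have h3 : ‖p.1‖ - ‖w‖ ≤ ‖p.1 - w‖ := by
            have := norm_sub_norm_le p.1 w
            linarith
          rw [← dist_eq_norm, dist_comm] at h3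
          linarith
        -- derivative bound
        have hφp : ‖φ' p.1‖ ≤ σ := by
          refine deriv_bound (hdiff p.1) hσpos.le one_pos fun z hz => ?_
          have hzR : R ≤ ‖z‖ := by
            have h3 : ‖p.1‖ - ‖z‖ ≤ ‖p.1 - z‖ := by
              have := norm_sub_norm_le p.1 z
              linarith
            rw [← dist_eq_norm] at h3
            have : ‖w‖ / 2 ≥ R + 1 := by linarith
            linarith
          exact hp3 ⟨z, hzR⟩
        refine ⟨p.1, ?_, ?_, ?_⟩
        · rw [abs_le]
          constructor
          · have := neg_abs_le c; linarith
          · have := le_abs_self c; linarith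
        · linarith
        · have h8 : (8:ℝ) / ((n:ℝ) + 1) = 8 * ε := by rw [hε]; ring
          rw [h8]
          have t1 : (1 + ‖p.1‖) * ‖φ' p.1‖ ≤ (1 + 3 * ‖w‖ / 2) * σ :=
            mul_le_mul (by linarith) hφp (norm_nonneg _) (by linarith)
          have t2 : σ ≤ 2 * ε := by nlinarith
          nlinarith
      choose y hy1 hy2 hy3 using hy
      have hprod : Tendsto (fun n => (1 + ‖y n‖) * ‖φ' (y n)‖) atTop (𝓝 0) := by
        refine squeeze_zero (fun n => by positivity) hy3 ?_
        have := tendsto_one_div_add_atTop_nhds_zero_nat.const_mul (8:ℝ)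
        simp only [mul_one_div] at this
        exact (by simpa using this)
      obtain ⟨s, p, hs, hconv⟩ := hC y ⟨|c| + 1, hy1⟩ hprod
      have hnorm_top : Tendsto (fun j => ‖y (s j)‖) atTop atTop := by
        refine tendsto_atTop_mono (fun j => ?_) tendsto_natCast_atTop_atTop
        calc (j:ℝ) ≤ (s j : ℝ) := Nat.cast_le.mpr (hs.le_apply)
          _ ≤ (s j : ℝ) + 1 := by linarith
          _ ≤ ‖y (s j)‖ := hy2 (s j)
      exact (not_tendsto_nhds_of_tendsto_atTop hnorm_top ‖p‖) hconv.norm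
    · -- bounded subsequence case
      push_neg at hb
      obtain ⟨C, hC'⟩ := hb
      obtain ⟨s, hs, hsC⟩ := extraction_of_frequently_atTop hC'
      have h1 : Tendsto (fun j => ‖φ' (x (s j))‖) atTop (𝓝 0) :=
        hderiv.comp hs.tendsto_atTop
      have hprod : Tendsto (fun j => (1 + ‖x (s j)‖) * ‖φ' (x (s j))‖) atTop (𝓝 0) := by
        have h2 : Tendsto (fun j => (1 + C) * ‖φ' (x (s j))‖) atTop (𝓝 ((1 + C) * 0)) :=
          h1.const_mul _
        rw [mul_zero] at h2
        refine squeeze_zero (fun j => by positivity) (fun j => ?_) h2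
        have : ‖x (s j)‖ ≤ C := (hsC j).le
        exact mul_le_mul_of_nonneg_right (by linarith) (norm_nonneg _)
      obtain ⟨s', p, hs', hconv⟩ := hC (fun j => x (s j)) ⟨M, fun j => hM (s j)⟩ hprod
      exact ⟨s ∘ s', p, hs.comp hs', hconv⟩
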